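/- arXiv:2404.17796 — 2 statements merged into one kernel-verified Lean document; each statement's English description precedes it below -/
import Mathlib

section
/- For a convex continuous function f on [a,b], the remainder satisfies the a posteriori bound |R[Q_{2n}^{Tr}; f]| ≤ |Q_n^{Tr}[f] - Q_{2n}^{Tr}[f]|. -/
/-- Composite trapezium rule `Q_n^{Tr}[f]` on `[a,b]` with `n` subintervals. -/
noncomputable def trapRule (a b : ℝ) (n : ℕ) (f : ℝ → ℝ) : ℝ :=
  ((b - a) / n) * ∑ i ∈ Finset.range (n + 1),
    (if i = 0 ∨ i = n then (1 : ℝ) / 2 else 1) * f (a + i * ((b - a) / n))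

/- Auxiliary lemmas -/

open intervalIntegral Finset in
/-- One-interval trapezium estimate for a convex function. -/
lemma trap_upper_aux {a b : ℝ} {f : ℝ → ℝ} (hconv : ConvexOn ℝ (Set.Icc a b) f)
    (hcont : ContinuousOn f (Set.Icc a b)) {c d : ℝ} (hac : a ≤ c) (hcd : c < d)
    (hdb : d ≤ b) : (∫ x in c..d, f x) ≤ (d - c) * (f c + f d) / 2 := by
  have hsub : Set.Icc c d ⊆ Set.Icc a b := Set.Icc_subset_Icc hac hdb
  have hdc : d - c ≠ 0 := by linarith
  have hfint : IntervalIntegrable f MeasureTheory.volume c d :=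
    (hcont.mono hsub).intervalIntegrable_of_Icc hcd.le
  set A := (f c * d - f d * c) / (d - c) with hA
  set B := (f d - f c) / (d - c) with hB
  have hgint : IntervalIntegrable (fun x => A + B * x) MeasureTheory.volume c d :=
    ((continuous_const.add (continuous_const.mul continuous_id)).intervalIntegrable c d)
  have hpt : ∀ x ∈ Set.Icc c d, f x ≤ A + B * x := by
    intro x hx
    obtain ⟨hx1, hx2⟩ := hx
    have hw1 : (0:ℝ) ≤ (d - x) / (d - c) := by
      apply div_nonneg <;> linarith
    have hw2 : (0:ℝ) ≤ (x - c) / (d - c) := by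
      apply div_nonneg <;> linarith
    have hw3 : (d - x) / (d - c) + (x - c) / (d - c) = 1 := by field_simp; ring
    have hcmem : c ∈ Set.Icc a b := ⟨hac, by linarith⟩
    have hdmem : d ∈ Set.Icc a b := ⟨by linarith, hdb⟩
    have key := hconv.2 hcmem hdmem hw1 hw2 hw3
    have hcomb : ((d - x) / (d - c)) • c + ((x - c) / (d - c)) • d = x := by
      simp only [smul_eq_mul]
      field_simp
      ring
    rw [hcomb] at key
    calc f x ≤ ((d - x) / (d - c)) * f c + ((x - c) / (d - c)) * f d := key
      _ = A + B * x := by rw [hA, hB]; field_simp; ring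
  calc (∫ x in c..d, f x) ≤ ∫ x in c..d, (A + B * x) :=
        integral_mono_on hcd.le hfint hgint hpt
    _ = A * (d - c) + B * ((d ^ 2 - c ^ 2) / 2) := by
        rw [integral_add (intervalIntegrable_const) ((intervalIntegrable_id).const_mul B),
          integral_const, integral_const_mul, integral_id]
        simp [smul_eq_mul]; ring
    _ = (d - c) * (f c + f d) / 2 := by rw [hA, hB]; field_simp; ring

open intervalIntegral Finset in
/-- One-interval midpoint estimate for a convex function. -/
lemma mid_lower_aux {a b : ℝ} {f : ℝ → ℝ} (hconv : ConvexOn ℝ (Set.Icc a b) f)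
    (hcont : ContinuousOn f (Set.Icc a b)) {c d : ℝ} (hac : a ≤ c) (hcd : c < d)
    (hdb : d ≤ b) : (d - c) * f ((c + d) / 2) ≤ ∫ x in c..d, f x := by
  have hsub : Set.Icc c d ⊆ Set.Icc a b := Set.Icc_subset_Icc hac hdb
  have hfint : IntervalIntegrable f MeasureTheory.volume c d :=
    (hcont.mono hsub).intervalIntegrable_of_Icc hcd.le
  have hmaps : Set.MapsTo (fun x => c + d - x) (Set.Icc c d) (Set.Icc c d) := by
    intro x hx
    exact ⟨by simp; linarith [hx.2], by simp; linarith [hx.1]⟩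
  have hcont2 : ContinuousOn (fun x => f (c + d - x)) (Set.Icc c d) :=
    (hcont.mono hsub).comp (continuous_const.sub continuous_id).continuousOn hmaps
  have hfint2 : IntervalIntegrable (fun x => f (c + d - x)) MeasureTheory.volume c d :=
    hcont2.intervalIntegrable_of_Icc hcd.le
  have hrefl : (∫ x in c..d, f (c + d - x)) = ∫ x in c..d, f x := by
    have h := integral_comp_sub_left (a := c) (b := d) f (c + d)
    rw [show c + d - d = c by ring, show c + d - c = d by ring] at h
    exact h
  have hpt : ∀ x ∈ Set.Icc c d, f ((c + d) / 2) ≤ (f x + f (c + d - x)) / 2 := by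
    intro x hx
    obtain ⟨hx1, hx2⟩ := hx
    have hxm : x ∈ Set.Icc a b := ⟨by linarith, by linarith⟩
    have hym : c + d - x ∈ Set.Icc a b := ⟨by linarith, by linarith⟩
    have key := hconv.2 hxm hym (by norm_num : (0:ℝ) ≤ 1/2) (by norm_num : (0:ℝ) ≤ 1/2)
      (by norm_num)
    have hcomb : ((1:ℝ)/2) • x + ((1:ℝ)/2) • (c + d - x) = (c + d) / 2 := by
      simp only [smul_eq_mul]; ring
    rw [hcomb] at key
    calc f ((c + d) / 2) ≤ (1/2) * f x + (1/2) * f (c + d - x) := key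
      _ = (f x + f (c + d - x)) / 2 := by ring
  have hmono : (∫ x in c..d, f ((c + d) / 2)) ≤ ∫ x in c..d, (f x + f (c + d - x)) / 2 :=
    integral_mono_on hcd.le (intervalIntegrable_const)
      ((hfint.add hfint2).div_const 2) hpt
  have e1 : (∫ x in c..d, f ((c + d) / 2)) = (d - c) * f ((c + d) / 2) := by
    rw [integral_const]; simp [smul_eq_mul]
  have e2 : (∫ x in c..d, (f x + f (c + d - x)) / 2) = ∫ x in c..d, f x := by
    rw [integral_div, integral_add hfint hfint2, hrefl]
    ring
  rw [e1, e2] at hmono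
  exact hmono

open Finset in
/-- Rewriting the weighted sum of the trapezium rule as a sum over subintervals. -/
lemma trap_sum_aux (F : ℕ → ℝ) {m : ℕ} (hm : 0 < m) :
    ∑ i ∈ range (m + 1), (if i = 0 ∨ i = m then (1:ℝ)/2 else 1) * F i
      = ∑ i ∈ range m, (F i + F (i + 1)) / 2 := by
  have h1 : ∀ i ∈ range (m + 1), (if i = 0 ∨ i = m then (1:ℝ)/2 else 1) * F i
      = F i - (if i = 0 then F 0 / 2 else 0) - (if i = m then F m / 2 else 0) := by
    intro i _
    by_cases h0 : i = 0
    · subst h0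
      have hne : ¬ ((0:ℕ) = m) := by omega
      simp [hne]; ring
    · by_cases hm' : i = m
      · subst hm'
        simp [h0]; ring
      · simp [h0, hm']
  rw [sum_congr rfl h1]
  have h2 : ∑ i ∈ range (m + 1), (F i - (if i = 0 then F 0 / 2 else 0)
      - (if i = m then F m / 2 else 0))
      = (∑ i ∈ range (m + 1), F i) - F 0 / 2 - F m / 2 := by
    rw [Finset.sum_sub_distrib, Finset.sum_sub_distrib]
    congr 1
    · congr 1
      rw [Finset.sum_ite_eq' (range (m + 1)) 0 (fun _ => F 0 / 2)]
      simp
    · rw [Finset.sum_ite_eq' (range (m + 1)) m (fun _ => F m / 2)]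
      simp
  rw [h2]
  have e1 : ∑ i ∈ range (m + 1), F i = (∑ i ∈ range m, F i) + F m :=
    Finset.sum_range_succ F m
  have e2 : ∑ i ∈ range (m + 1), F i = (∑ i ∈ range m, F (i + 1)) + F 0 :=
    Finset.sum_range_succ' F m
  have e3 : ∑ i ∈ range m, (F i + F (i + 1)) / 2
      = ((∑ i ∈ range m, F i) + ∑ i ∈ range m, F (i + 1)) / 2 := by
    rw [← Finset.sum_add_distrib, Finset.sum_div]
  rw [e3]
  linarith

open Finset in
lemma sum_pair_aux (g : ℕ → ℝ) (n : ℕ) :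
    ∑ j ∈ range (2 * n), g j = ∑ i ∈ range n, (g (2 * i) + g (2 * i + 1)) := by
  induction n with
  | zero => simp
  | succ n ih =>
      rw [show 2 * (n + 1) = 2 * n + 1 + 1 by ring, sum_range_succ, sum_range_succ,
        sum_range_succ, ih]
      ring

open Finset in
/-- The trapezium rule as a sum of elementary trapezium areas. -/
lemma trapRule_eq_sum (a b : ℝ) {m : ℕ} (hm : 0 < m) (f : ℝ → ℝ) :
    trapRule a b m f = ∑ i ∈ range m,
      ((b - a) / m) * ((f (a + i * ((b - a) / m)) + f (a + (i + 1 : ℕ) * ((b - a) / m))) / 2) := by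
  unfold trapRule
  rw [trap_sum_aux (fun i => f (a + i * ((b - a) / m))) hm, Finset.mul_sum]

open Finset in
/-- For a convex function, the trapezium rule overestimates the integral. -/
lemma integral_le_trapRule {a b : ℝ} (hab : a < b) {f : ℝ → ℝ}
    (hconv : ConvexOn ℝ (Set.Icc a b) f) (hcont : ContinuousOn f (Set.Icc a b))
    {m : ℕ} (hm : 0 < m) : (∫ x in a..b, f x) ≤ trapRule a b m f := by
  have hmR : (0:ℝ) < m := by exact_mod_cast hm
  set h := (b - a) / m with hh
  have hpos : 0 < h := div_pos (by linarith) hmR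
  set x : ℕ → ℝ := fun i => a + i * h with hx
  have hbnd : ∀ i : ℕ, i < m → a ≤ x i ∧ x i < x (i + 1) ∧ x (i + 1) ≤ b := by
    intro i hi
    have hi1 : ((i : ℝ) + 1) ≤ m := by exact_mod_cast hi
    have hi0 : (0:ℝ) ≤ i := Nat.cast_nonneg i
    refine ⟨by simp [hx]; positivity, ?_, ?_⟩
    · simp only [hx]; push_cast; nlinarith
    · simp only [hx]; push_cast
      have : ((i:ℝ) + 1) * h ≤ m * h := by nlinarith
      have hmh : (m:ℝ) * h = b - a := by rw [hh, mul_div_assoc']; exact mul_div_cancel_left₀ (b - a) hmR.ne'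
      linarith
  have hint : ∀ k : ℕ, k < m → IntervalIntegrable f MeasureTheory.volume (x k) (x (k + 1)) := by
    intro k hk
    obtain ⟨h1, h2, h3⟩ := hbnd k hk
    exact ((hcont.mono (Set.Icc_subset_Icc h1 h3)).intervalIntegrable_of_Icc h2.le)
  have hsplit : ∑ k ∈ range m, (∫ t in x k..x (k + 1), f t) = ∫ t in (x 0)..(x m), f t :=
    intervalIntegral.sum_integral_adjacent_intervals hint
  have hx0 : x 0 = a := by simp [hx]
  have hxm : x m = b := by
    simp only [hx, hh]
    field_simp
    ring
  rw [hx0, hxm] at hsplit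
  rw [← hsplit, trapRule_eq_sum a b hm f]
  apply Finset.sum_le_sum
  intro i hi
  obtain ⟨h1, h2, h3⟩ := hbnd i (mem_range.mp hi)
  have := trap_upper_aux hconv hcont h1 h2 h3
  have hd : x (i + 1) - x i = h := by simp [hx]; ring
  rw [hd] at this
  calc (∫ t in x i..x (i + 1), f t) ≤ h * (f (x i) + f (x (i + 1))) / 2 := this
    _ = (b - a) / m * ((f (a + i * ((b - a) / m)) + f (a + (i + 1 : ℕ) * ((b - a) / m))) / 2) := by
        simp only [hx, hh]; push_cast; ring

open Finset in
/-- The composite midpoint rule underestimates the integral for convex functions. -/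
lemma midSum_le_integral {a b : ℝ} (hab : a < b) {f : ℝ → ℝ}
    (hconv : ConvexOn ℝ (Set.Icc a b) f) (hcont : ContinuousOn f (Set.Icc a b))
    {m : ℕ} (hm : 0 < m) :
    (∑ i ∈ range m, ((b - a) / m) * f (a + i * ((b - a) / m) + ((b - a) / m) / 2))
      ≤ ∫ x in a..b, f x := by
  have hmR : (0:ℝ) < m := by exact_mod_cast hm
  set h := (b - a) / m with hh
  have hpos : 0 < h := div_pos (by linarith) hmR
  set x : ℕ → ℝ := fun i => a + i * h with hx
  have hbnd : ∀ i : ℕ, i < m → a ≤ x i ∧ x i < x (i + 1) ∧ x (i + 1) ≤ b := by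
    intro i hi
    have hi1 : ((i : ℝ) + 1) ≤ m := by exact_mod_cast hi
    have hi0 : (0:ℝ) ≤ i := Nat.cast_nonneg i
    refine ⟨by simp [hx]; positivity, ?_, ?_⟩
    · simp only [hx]; push_cast; nlinarith
    · simp only [hx]; push_cast
      have : ((i:ℝ) + 1) * h ≤ m * h := by nlinarith
      have hmh : (m:ℝ) * h = b - a := by rw [hh, mul_div_assoc']; exact mul_div_cancel_left₀ (b - a) hmR.ne'
      linarith
  have hint : ∀ k : ℕ, k < m → IntervalIntegrable f MeasureTheory.volume (x k) (x (k + 1)) := by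
    intro k hk
    obtain ⟨h1, h2, h3⟩ := hbnd k hk
    exact ((hcont.mono (Set.Icc_subset_Icc h1 h3)).intervalIntegrable_of_Icc h2.le)
  have hsplit : ∑ k ∈ range m, (∫ t in x k..x (k + 1), f t) = ∫ t in (x 0)..(x m), f t :=
    intervalIntegral.sum_integral_adjacent_intervals hint
  have hx0 : x 0 = a := by simp [hx]
  have hxm : x m = b := by
    simp only [hx, hh]
    field_simp
    ring
  rw [hx0, hxm] at hsplit
  rw [← hsplit]
  apply Finset.sum_le_sum
  intro i hi
  obtain ⟨h1, h2, h3⟩ := hbnd i (mem_range.mp hi)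
  have := mid_lower_aux hconv hcont h1 h2 h3
  have hd : x (i + 1) - x i = h := by simp [hx]; ring
  have hmid : (x i + x (i + 1)) / 2 = a + i * h + h / 2 := by
    simp [hx]; ring
  rw [hd, hmid] at this
  calc ((b - a) / m) * f (a + i * ((b - a) / m) + ((b - a) / m) / 2)
      = h * f (a + i * h + h / 2) := by rw [hh]
    _ ≤ ∫ t in x i..x (i + 1), f t := this

open Finset in
/-- Refinement identity: `Q_{2n} = (Q_n + M_n)/2`. -/
lemma trapRule_two_mul (a b : ℝ) {n : ℕ} (hn : 0 < n) (f : ℝ → ℝ) :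
    trapRule a b (2 * n) f = (trapRule a b n f
      + ∑ i ∈ range n, ((b - a) / n) * f (a + i * ((b - a) / n) + ((b - a) / n) / 2)) / 2 := by
  have hnR : (0:ℝ) < n := by exact_mod_cast hn
  set h := (b - a) / n with hh
  have h2n : ((2 * n : ℕ) : ℝ) = 2 * n := by push_cast; ring
  have hh2 : (b - a) / ((2 * n : ℕ) : ℝ) = h / 2 := by
    rw [h2n, hh, div_div, mul_comm]
  rw [trapRule_eq_sum a b (by omega : 0 < 2 * n) f, trapRule_eq_sum a b hn f]
  rw [sum_pair_aux (fun j => (b - a) / ((2 * n : ℕ) : ℝ) *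
    ((f (a + j * ((b - a) / ((2 * n : ℕ) : ℝ))) +
      f (a + (j + 1 : ℕ) * ((b - a) / ((2 * n : ℕ) : ℝ)))) / 2)) n]
  rw [← Finset.sum_add_distrib, Finset.sum_div]
  apply Finset.sum_congr rfl
  intro i _
  simp only [hh2]
  have e1 : a + ((2 * i : ℕ) : ℝ) * (h / 2) = a + i * h := by push_cast; ring
  have e2 : a + ((2 * i + 1 : ℕ) : ℝ) * (h / 2) = a + i * h + h / 2 := by push_cast; ring
  have e3 : a + ((2 * i + 1 + 1 : ℕ) : ℝ) * (h / 2) = a + ((i + 1 : ℕ) : ℝ) * h := by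
    push_cast; ring
  rw [e1, e2, e3]
  ring

/-- A posteriori error estimate for the trapezium rule and convex integrands:
`|R[Q_{2n}^{Tr}; f]| ≤ |Q_n^{Tr}[f] - Q_{2n}^{Tr}[f]|`. -/
theorem trapRule_aposteriori (a b : ℝ) (hab : a < b) (n : ℕ) (hn : 0 < n)
    (f : ℝ → ℝ) (hconv : ConvexOn ℝ (Set.Icc a b) f)
    (hcont : ContinuousOn f (Set.Icc a b)) :
    |(∫ x in a..b, f x) - trapRule a b (2 * n) f| ≤
      |trapRule a b n f - trapRule a b (2 * n) f| := by
  set I := ∫ x in a..b, f x with hI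
  set Q := trapRule a b n f with hQ
  set Q2 := trapRule a b (2 * n) f with hQ2
  set M := ∑ i ∈ Finset.range n, ((b - a) / n) * f (a + i * ((b - a) / n) + ((b - a) / n) / 2)
    with hM
  have h1 : I ≤ Q2 := integral_le_trapRule hab hconv hcont (by omega : 0 < 2 * n)
  have h2 : M ≤ I := midSum_le_integral hab hconv hcont hn
  have h3 : Q2 = (Q + M) / 2 := trapRule_two_mul a b hn f
  have h4 : Q2 ≤ Q := by linarith
  rw [abs_of_nonpos (by linarith : I - Q2 ≤ 0), abs_of_nonneg (by linarith : 0 ≤ Q - Q2)]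
  linarith
end

section
/- For t, τ ∈ [a, a+h], h = (b-a)/(2n), t_1 = a+h, the function φ(t,τ) = ((t-a)(τ-a)/4)·[tτ - b(t+τ) + t_1(2b - t_1) - c(4n-3)h^2] is nonpositive on [a, a+h]^2 if and only if c ≥ (4n-1)/(4n-3); in particular the bracket attains its maximum on the square at (t,τ) = (a,a), where it equals (4n-1-(4n-3)c) h^2. -/
/-- The vertex argument on `Δ_{0,0}^1` for `S_n^+`: with `h = (b-a)/(2n)`,
`t_1 = a + h`, `φ(t,τ) = ((t-a)(τ-a)/4)[tτ - b(t+τ) + t_1(2b-t_1) - c(4n-3)h^2]`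
is nonpositive on `[a, a+h]^2` iff `c ≥ (4n-1)/(4n-3)`; the bracket at `(a,a)`
equals `(4n-1-(4n-3)c)h^2`. -/
theorem Splus_first_cell (a b : ℝ) (hab : a < b) (n : ℕ) (hn : 0 < n)
    (c : ℝ) (hc : 0 < c) :
    a * a - b * (a + a) + (a + (b - a) / (2 * n)) * (2 * b - (a + (b - a) / (2 * n)))
        - c * (4 * n - 3) * ((b - a) / (2 * n)) ^ 2 =
      (4 * (n : ℝ) - 1 - (4 * n - 3) * c) * ((b - a) / (2 * n)) ^ 2 ∧
    ((∀ t ∈ Set.Icc a (a + (b - a) / (2 * n)),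
        ∀ τ ∈ Set.Icc a (a + (b - a) / (2 * n)),
        ((t - a) * (τ - a) / 4) *
          (t * τ - b * (t + τ) +
            (a + (b - a) / (2 * n)) * (2 * b - (a + (b - a) / (2 * n))) -
            c * (4 * n - 3) * ((b - a) / (2 * n)) ^ 2) ≤ 0) ↔
      (4 * (n : ℝ) - 1) / (4 * n - 3) ≤ c) := by
  have hn1 : (1:ℝ) ≤ (n:ℝ) := by exact_mod_cast hn
  set h : ℝ := (b - a) / (2 * (n:ℝ)) with hdef
  have hnpos : (0:ℝ) < 2 * (n:ℝ) := by linarith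
  have hhpos : 0 < h := div_pos (by linarith) hnpos
  have hba : b - a = 2 * (n:ℝ) * h := by
    rw [hdef]; field_simp
  have h3 : (0:ℝ) < 4 * (n:ℝ) - 3 := by linarith
  have hhalf : 2 * h ≤ b - a := by nlinarith
  have hid : a * a - b * (a + a) + (a + h) * (2 * b - (a + h)) = (4 * (n:ℝ) - 1) * h ^ 2 := by
    linear_combination 2 * h * hba
  constructor
  · linear_combination 2 * h * hba
  constructor
  · -- forward
    intro H
    rw [div_le_iff₀ h3]
    have key : (4 * (n:ℝ) - 1) * h ^ 2 ≤ c * (4 * (n:ℝ) - 3) * h ^ 2 := by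
      apply le_of_forall_pos_le_add
      intro ε hε
      set δ : ℝ := min h (ε / (2 * (b - a))) with hδdef
      have hδpos : 0 < δ := lt_min hhpos (div_pos hε (by linarith))
      have hδh : δ ≤ h := min_le_left _ _
      have hδε : δ * (2 * (b - a)) ≤ ε := by
        rw [← le_div_iff₀ (show (0:ℝ) < 2 * (b - a) by linarith)]
        exact min_le_right _ _
      have hmem : a + δ ∈ Set.Icc a (a + h) := ⟨by linarith, by linarith⟩
      have HH := H (a + δ) hmem (a + δ) hmem
      have hBr : (a + δ) * (a + δ) - b * ((a + δ) + (a + δ)) + (a + h) * (2 * b - (a + h))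
          - c * (4 * n - 3) * h ^ 2 ≤ 0 := by
        by_contra hpos
        push_neg at hpos
        nlinarith [mul_pos (show (0:ℝ) < δ * δ / 4 by positivity) hpos]
      nlinarith [hid, hδε, sq_nonneg δ]
    have hh2 : (0:ℝ) < h ^ 2 := by positivity
    have := (mul_le_mul_iff_of_pos_right hh2).mp key
    linarith
  · -- backward
    intro hc' t ht τ hτ
    have hc2 : 4 * (n:ℝ) - 1 ≤ c * (4 * (n:ℝ) - 3) := by
      rw [div_le_iff₀ h3] at hc'
      linarith
    obtain ⟨hta, hth⟩ := ht
    obtain ⟨hτa, hτh⟩ := hτ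
    have hfac : 0 ≤ (t - a) * (τ - a) / 4 := by
      have := mul_nonneg (sub_nonneg.2 hta) (sub_nonneg.2 hτa)
      linarith
    have hBr : t * τ - b * (t + τ) + (a + h) * (2 * b - (a + h))
        - c * (4 * n - 3) * h ^ 2 ≤ 0 := by
      nlinarith [mul_nonneg (show (0:ℝ) ≤ a + h - t by linarith) (show (0:ℝ) ≤ τ - a by linarith),
        mul_nonneg (show (0:ℝ) ≤ b - a - h by linarith) (show (0:ℝ) ≤ τ - a by linarith),
        mul_nonneg (show (0:ℝ) ≤ b - a by linarith) (show (0:ℝ) ≤ t - a by linarith),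
        mul_nonneg (show (0:ℝ) ≤ c * (4 * (n:ℝ) - 3) - (4 * (n:ℝ) - 1) by linarith)
          (sq_nonneg h), hid]
    exact mul_nonpos_of_nonneg_of_nonpos hfac hBr
end
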